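/- Let α, E, λ ∈ ℂ with α ≠ 0, and define f(z) = α z · (1 + (λ^2 - 2 E z^2)/(α^2 z^4))^(1/2), where w ↦ w^(1/2) denotes the principal complex power. Then there exists R₀ > 0 such that for every R > R₀, f is continuous on the circle |z| = R, and the counterclockwise circle integral of f over |z| = R equals -2πi E/α. -/

import Mathlib

open Complex Metric Set Filter

lemma circleIntegral_add' {f g : ℂ → ℂ} {c : ℂ} {R : ℝ} (hf : CircleIntegrable f c R)
    (hg : CircleIntegrable g c R) :
    (∮ z in C(c, R), (f z + g z)) = (∮ z in C(c, R), f z) + ∮ z in C(c, R), g z := by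
  simp only [circleIntegral, smul_add, intervalIntegral.integral_add hf.out hg.out]

lemma aux_div1 (a b M : ℝ) (ha : a ≠ 0) (hb : b ≠ 0) :
    a * b * (M / (a ^ 2 * b ^ 2)) ^ 2 = M ^ 2 / a ^ 3 / b ^ 3 := by
  field_simp

lemma aux_div2 (c r : ℝ) (hr : r ≠ 0) :
    2 * Real.pi * r * (c / r ^ 3) = 2 * Real.pi * c / r ^ 2 := by
  field_simp

/-- Quantitative second-order bound for the principal square root near 1. -/
lemma sqrt_branch_bound {w : ℂ} (hw : ‖w‖ ≤ 1 / 2) :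
    ‖(1 + w) ^ (1 / 2 : ℂ) - 1 - w / 2‖ ≤ ‖w‖ ^ 2 := by
  have h1 : (1 : ℂ) + w ≠ 0 := by
    intro h
    have h2 : w = -1 := by linear_combination h
    rw [h2] at hw
    norm_num at hw
  set F : ℂ := (1 + w) ^ (1 / 2 : ℂ) with hF
  have hFre : 0 ≤ F.re := by
    rw [hF, Complex.cpow_def_of_ne_zero h1, Complex.exp_re]
    apply mul_nonneg (Real.exp_pos _).le
    apply Real.cos_nonneg_of_mem_Icc
    have him : (Complex.log (1 + w) * (1 / 2 : ℂ)).im = (1 + w).arg / 2 := by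
      simp [Complex.mul_im, Complex.log_im]; ring
    rw [him]
    refine ⟨by linarith [Complex.neg_pi_lt_arg (1 + w)],
      by linarith [Complex.arg_le_pi (1 + w)]⟩
  have hFsq : F * F = 1 + w := by
    rw [hF, ← Complex.cpow_add _ _ h1]
    norm_num
  set D : ℂ := F + (1 + w / 2) with hD
  have hwre : -(1 / 4 : ℝ) ≤ (w / 2).re := by
    have h3 : |(w / 2).re| ≤ 1 / 4 := by
      refine (Complex.abs_re_le_norm _).trans ?_
      have : ‖w / 2‖ = ‖w‖ / 2 := by
        rw [norm_div]; simp
      rw [this]; linarith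
    linarith [neg_abs_le (w / 2).re]
  have hDre : (3 : ℝ) / 4 ≤ D.re := by
    have : D.re = F.re + (1 + (w / 2).re) := by
      simp [hD, Complex.add_re]
    rw [this]; linarith
  have hDnorm : (3 : ℝ) / 4 ≤ ‖D‖ := hDre.trans (Complex.re_le_norm D)
  have hD0 : D ≠ 0 := by
    intro h; rw [h] at hDnorm; norm_num at hDnorm
  have hkey : F - 1 - w / 2 = -(w ^ 2 / 4) / D := by
    rw [eq_div_iff hD0, hD]
    linear_combination hFsq
  rw [hkey, norm_div, norm_neg, norm_div]
  have h4 : ‖(4 : ℂ)‖ = 4 := by norm_num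
  rw [norm_pow, h4, div_div, div_le_iff₀ (by positivity : (0:ℝ) < 4 * ‖D‖)]
  nlinarith [norm_nonneg w, norm_nonneg D]

/-- Infinity-circle contribution to the closed Voros period for the (variationally
modified) 3D harmonic oscillator: for `α ≠ 0`, the branch at infinity
`f(z) = α z (1 + (λ² - 2Ez²)/(α² z⁴))^{1/2}` of the leading WKB momentum
`√(α² r² + λ²/r² - 2E)` is continuous on all sufficiently large circles `|z| = R`,
and its counterclockwise circle integral equals `-2πiE/α`. -/
theorem oscillator_infinity_circle (α E lam : ℂ) (hα : α ≠ 0) :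
    ∃ R₀ : ℝ, 0 < R₀ ∧ ∀ R : ℝ, R₀ < R →
      ContinuousOn
        (fun z : ℂ => α * z * (1 + (lam ^ 2 - 2 * E * z ^ 2) / (α ^ 2 * z ^ 4)) ^ (1 / 2 : ℂ))
        (Metric.sphere (0 : ℂ) R) ∧
      circleIntegral
        (fun z : ℂ => α * z * (1 + (lam ^ 2 - 2 * E * z ^ 2) / (α ^ 2 * z ^ 4)) ^ (1 / 2 : ℂ))
        0 R = -2 * Real.pi * Complex.I * E / α := by
  have hαn : (0:ℝ) < ‖α‖ := norm_pos_iff.mpr hα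
  set g : ℂ → ℂ := fun z => (lam ^ 2 - 2 * E * z ^ 2) / (α ^ 2 * z ^ 4) with hg
  set f : ℂ → ℂ := fun z => α * z * (1 + g z) ^ (1 / 2 : ℂ) with hf
  obtain ⟨M, hM⟩ : ∃ M : ℝ, M = ‖lam‖ ^ 2 + 2 * ‖E‖ + 1 := ⟨_, rfl⟩
  have hMpos : 0 < M := by rw [hM]; positivity
  obtain ⟨R₀, hR₀⟩ : ∃ R₀ : ℝ, R₀ = 1 + 2 * M / ‖α‖ ^ 2 := ⟨_, rfl⟩
  have hR₀1 : 1 ≤ R₀ := by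
    rw [hR₀]
    have : 0 ≤ 2 * M / ‖α‖ ^ 2 := by positivity
    linarith
  have hR₀pos : 0 < R₀ := by linarith
  -- key norm bound on g
  have hgbound : ∀ z : ℂ, R₀ ≤ ‖z‖ → ‖g z‖ ≤ M / (‖α‖ ^ 2 * ‖z‖ ^ 2) := by
    intro z hz
    have hz1 : 1 ≤ ‖z‖ := le_trans hR₀1 hz
    have hz0 : z ≠ 0 := by
      intro h; rw [h] at hz1; simp at hz1; linarith
    have hnum : ‖lam ^ 2 - 2 * E * z ^ 2‖ ≤ M * ‖z‖ ^ 2 := by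
      calc ‖lam ^ 2 - 2 * E * z ^ 2‖ ≤ ‖lam ^ 2‖ + ‖2 * E * z ^ 2‖ := norm_sub_le _ _
        _ = ‖lam‖ ^ 2 + 2 * ‖E‖ * ‖z‖ ^ 2 := by
            rw [norm_pow, norm_mul, norm_mul, norm_pow]
            norm_num
        _ ≤ M * ‖z‖ ^ 2 := by
            rw [hM]
            have hz2 : 1 ≤ ‖z‖ ^ 2 := by nlinarith
            nlinarith [sq_nonneg ‖lam‖, norm_nonneg E]
    have hden : ‖α ^ 2 * z ^ 4‖ = ‖α‖ ^ 2 * ‖z‖ ^ 4 := by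
      rw [norm_mul, norm_pow, norm_pow]
    have hdpos : (0:ℝ) < ‖α‖ ^ 2 * ‖z‖ ^ 4 := by positivity
    rw [hg]
    simp only [norm_div, hden]
    rw [div_le_div_iff₀ hdpos (by positivity)]
    calc ‖lam ^ 2 - 2 * E * z ^ 2‖ * (‖α‖ ^ 2 * ‖z‖ ^ 2)
        ≤ (M * ‖z‖ ^ 2) * (‖α‖ ^ 2 * ‖z‖ ^ 2) := by
          apply mul_le_mul_of_nonneg_right hnum (by positivity)
      _ = M * (‖α‖ ^ 2 * ‖z‖ ^ 4) := by ring
  have hghalf : ∀ z : ℂ, R₀ ≤ ‖z‖ → ‖g z‖ ≤ 1 / 2 := by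
    intro z hz
    refine (hgbound z hz).trans ?_
    have hz1 : 1 ≤ ‖z‖ := le_trans hR₀1 hz
    have h2 : 2 * M / ‖α‖ ^ 2 ≤ ‖z‖ := le_trans (by rw [hR₀] at hz ⊢; linarith) hz
    have h3 : 2 * M ≤ ‖α‖ ^ 2 * ‖z‖ := by
      rw [div_le_iff₀ (by positivity)] at h2; linarith [h2]
    have h4 : ‖α‖ ^ 2 * ‖z‖ ≤ ‖α‖ ^ 2 * ‖z‖ ^ 2 := by nlinarith
    rw [div_le_div_iff₀ (by positivity) (by norm_num)]
    nlinarith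
  have hslit : ∀ z : ℂ, R₀ ≤ ‖z‖ → 1 + g z ∈ Complex.slitPlane := by
    intro z hz
    rw [Complex.mem_slitPlane_iff]
    left
    have : |(g z).re| ≤ 1 / 2 := (Complex.abs_re_le_norm _).trans (hghalf z hz)
    have h5 : (1 + g z).re = 1 + (g z).re := by simp [Complex.add_re]
    rw [h5]
    have := neg_abs_le (g z).re
    linarith
  have hz0 : ∀ z : ℂ, R₀ ≤ ‖z‖ → z ≠ 0 := by
    intro z hz h
    rw [h] at hz; simp at hz; linarith
  -- differentiability of f on the outside region
  have hdiff : ∀ z : ℂ, R₀ ≤ ‖z‖ → DifferentiableAt ℂ f z := by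
    intro z hz
    have hzne := hz0 z hz
    have hden : α ^ 2 * z ^ 4 ≠ 0 := by
      apply mul_ne_zero (pow_ne_zero _ hα) (pow_ne_zero _ hzne)
    have hgd : DifferentiableAt ℂ g z := by
      apply DifferentiableAt.div
      · fun_prop
      · fun_prop
      · exact hden
    have hbase : DifferentiableAt ℂ (fun z => 1 + g z) z :=
      (differentiableAt_const _).add hgd
    have hc : DifferentiableAt ℂ (fun z => (1 + g z) ^ (1 / 2 : ℂ)) z :=
      hbase.cpow (differentiableAt_const _) (hslit z hz)
    exact (differentiableAt_id.const_mul α).mul hc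
  -- differentiability of the "tail" difference
  set p : ℂ → ℂ := fun z => α * z + lam ^ 2 / (2 * α) * z ^ (-3 : ℤ) + (-E / α) * z⁻¹ with hp
  have hpdiff : ∀ z : ℂ, z ≠ 0 → DifferentiableAt ℂ p z := by
    intro z hzne
    apply DifferentiableAt.add
    apply DifferentiableAt.add
    · exact differentiableAt_id.const_mul α
    · exact (differentiableAt_zpow.mpr (Or.inl hzne)).const_mul _
    · exact (differentiableAt_inv hzne).const_mul _
  -- the identity f = p + α z (sqrt - 1 - g/2)
  have hident : ∀ z : ℂ, z ≠ 0 →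
      f z - p z = α * z * ((1 + g z) ^ (1 / 2 : ℂ) - 1 - g z / 2) := by
    intro z hzne
    rw [hf, hp, hg]
    simp only [zpow_neg, zpow_ofNat]
    field_simp
    ring
  -- pointwise bound for the tail
  have htail : ∀ z : ℂ, R₀ ≤ ‖z‖ → ‖f z - p z‖ ≤ M ^ 2 / ‖α‖ ^ 3 / ‖z‖ ^ 3 := by
    intro z hz
    rw [hident z (hz0 z hz)]
    rw [norm_mul, norm_mul]
    have h1 : ‖(1 + g z) ^ (1 / 2 : ℂ) - 1 - g z / 2‖ ≤ ‖g z‖ ^ 2 :=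
      sqrt_branch_bound (hghalf z hz)
    have h2 : ‖g z‖ ^ 2 ≤ (M / (‖α‖ ^ 2 * ‖z‖ ^ 2)) ^ 2 := by
      apply pow_le_pow_left₀ (norm_nonneg _) (hgbound z hz)
    have hz1 : (1:ℝ) ≤ ‖z‖ := le_trans hR₀1 hz
    calc ‖α‖ * ‖z‖ * ‖(1 + g z) ^ (1 / 2 : ℂ) - 1 - g z / 2‖
        ≤ ‖α‖ * ‖z‖ * (M / (‖α‖ ^ 2 * ‖z‖ ^ 2)) ^ 2 := by
          apply mul_le_mul_of_nonneg_left (h1.trans h2) (by positivity)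
      _ = M ^ 2 / ‖α‖ ^ 3 / ‖z‖ ^ 3 := by
          have h0α : (‖α‖:ℝ) ≠ 0 := ne_of_gt hαn
          have h0z : (‖z‖:ℝ) ≠ 0 := by intro h; rw [h] at hz1; linarith
          exact aux_div1 _ _ _ h0α h0z
  refine ⟨R₀, hR₀pos, fun R hR => ?_⟩
  have hRpos : 0 < R := lt_trans hR₀pos hR
  have hsph : ∀ r : ℝ, ∀ z : ℂ, z ∈ sphere (0:ℂ) r → ‖z‖ = r := by
    intro r z hzs
    simpa using hzs
  have hcont : ContinuousOn f (sphere (0:ℂ) R) := by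
    intro z hzs
    exact (hdiff z (by rw [hsph R z hzs]; exact hR.le)).continuousAt.continuousWithinAt
  refine ⟨hcont, ?_⟩
  -- integrability
  have hfi : ∀ r : ℝ, R₀ < r → CircleIntegrable f 0 r := by
    intro r hr
    apply ContinuousOn.circleIntegrable (lt_trans hR₀pos hr).le
    intro z hzs
    exact (hdiff z (by rw [hsph r z hzs]; exact hr.le)).continuousAt.continuousWithinAt
  have hpi : ∀ r : ℝ, R₀ < r → CircleIntegrable p 0 r := by
    intro r hr
    apply ContinuousOn.circleIntegrable (lt_trans hR₀pos hr).le
    intro z hzs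
    have hzne : z ≠ 0 := hz0 z (by rw [hsph r z hzs]; exact hr.le)
    exact (hpdiff z hzne).continuousAt.continuousWithinAt
  -- the tail integral J
  set J : ℝ → ℂ := fun r => ∮ z in C(0, r), (f z - p z) with hJ
  have hJconst : ∀ r : ℝ, R ≤ r → J r = J R := by
    intro r hr
    apply circleIntegral_eq_of_differentiable_on_annulus_off_countable hRpos hr
      countable_empty
    · intro z hzm
      have hzn : R ≤ ‖z‖ := by
        have := hzm.2
        simp only [mem_ball, Complex.dist_eq, sub_zero] at this
        push_neg at this
        simpa using this
      have hzR₀ : R₀ ≤ ‖z‖ := le_trans hR.le hzn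
      exact ((hdiff z hzR₀).sub (hpdiff z (hz0 z hzR₀))).continuousAt.continuousWithinAt
    · intro z hzm
      have hzn : R ≤ ‖z‖ := by
        have := hzm.1.2
        simp only [mem_closedBall, Complex.dist_eq, sub_zero] at this
        push_neg at this
        simpa using this.le
      have hzR₀ : R₀ ≤ ‖z‖ := le_trans hR.le hzn
      exact (hdiff z hzR₀).sub (hpdiff z (hz0 z hzR₀))
  have hJbound : ∀ r : ℝ, R ≤ r → ‖J R‖ ≤ 2 * Real.pi * (M ^ 2 / ‖α‖ ^ 3) / r ^ 2 := by
    intro r hr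
    rw [← hJconst r hr]
    have hrpos : 0 < r := lt_of_lt_of_le hRpos hr
    have := circleIntegral.norm_integral_le_of_norm_le_const (c := (0:ℂ)) (R := r)
      (C := M ^ 2 / ‖α‖ ^ 3 / r ^ 3) hrpos.le
      (f := fun z => f z - p z) ?_
    · refine this.trans (le_of_eq ?_)
      have h0r : r ≠ 0 := ne_of_gt hrpos
      exact aux_div2 _ _ h0r
    · intro z hzs
      have hzn : ‖z‖ = r := hsph r z hzs
      have := htail z (by rw [hzn]; exact le_trans hR.le hr)
      rwa [hzn] at this
  have hJzero : J R = 0 := by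
    rw [← norm_le_zero_iff]
    have htend : Tendsto (fun r : ℝ => 2 * Real.pi * (M ^ 2 / ‖α‖ ^ 3) / r ^ 2)
        atTop (nhds 0) := by
      apply Filter.Tendsto.div_atTop tendsto_const_nhds
      exact tendsto_pow_atTop two_ne_zero
    refine ge_of_tendsto htend ?_
    filter_upwards [eventually_ge_atTop R] with r hr
    exact hJbound r hr
  -- decompose the integral
  have hsplit : (∮ z in C(0, R), f z) =
      (∮ z in C(0, R), p z) + J R := by
    have h := circleIntegral.integral_sub (hfi R hR) (hpi R hR)
    show _ = _ + ∮ z in C(0, R), (f z - p z)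
    rw [h]
    ring
  -- compute ∮ p
  have hmono1 : (∮ z in C(0, R), α * z) = 0 := by
    have h1 : (fun z : ℂ => α * z) = fun z : ℂ => α • (z - 0) ^ (1 : ℤ) := by
      funext z; simp [smul_eq_mul]
    rw [h1, circleIntegral.integral_smul,
      circleIntegral.integral_sub_zpow_of_ne (by decide) 0 0 R, smul_zero]
  have hmono3 : (∮ z in C(0, R), lam ^ 2 / (2 * α) * z ^ (-3 : ℤ)) = 0 := by
    have h1 : (fun z : ℂ => lam ^ 2 / (2 * α) * z ^ (-3 : ℤ)) =
        fun z : ℂ => (lam ^ 2 / (2 * α)) • (z - 0) ^ (-3 : ℤ) := by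
      funext z; simp [smul_eq_mul]
    rw [h1, circleIntegral.integral_smul,
      circleIntegral.integral_sub_zpow_of_ne (by decide) 0 0 R, smul_zero]
  have hmono2 : (∮ z in C(0, R), (-E / α) * z⁻¹) = (-E / α) * (2 * Real.pi * Complex.I) := by
    have h1 : (fun z : ℂ => (-E / α) * z⁻¹) = fun z : ℂ => (-E / α) • (z - 0)⁻¹ := by
      funext z; simp [smul_eq_mul]
    rw [h1, circleIntegral.integral_smul,
      circleIntegral.integral_sub_inv_of_mem_ball (by simpa using hRpos), smul_eq_mul]
  have hintp : (∮ z in C(0, R), p z) = (-E / α) * (2 * Real.pi * Complex.I) := by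
    have hi1 : CircleIntegrable (fun z : ℂ => α * z) 0 R :=
      (continuous_const.mul continuous_id).continuousOn.circleIntegrable hRpos.le
    have hi3 : CircleIntegrable (fun z : ℂ => lam ^ 2 / (2 * α) * z ^ (-3 : ℤ)) 0 R := by
      apply ContinuousOn.circleIntegrable hRpos.le
      intro z hzs
      have hzne : z ≠ 0 := by
        intro h; rw [h] at hzs; simp at hzs; exact absurd hzs.symm (ne_of_gt hRpos)
      exact (((differentiableAt_zpow.mpr (Or.inl hzne)).const_mul
        _).continuousAt.continuousWithinAt)
    have hi2 : CircleIntegrable (fun z : ℂ => (-E / α) * z⁻¹) 0 R := by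
      apply ContinuousOn.circleIntegrable hRpos.le
      intro z hzs
      have hzne : z ≠ 0 := by
        intro h; rw [h] at hzs; simp at hzs; exact absurd hzs.symm (ne_of_gt hRpos)
      have hd2 : DifferentiableAt ℂ (fun z : ℂ => (-E / α) * z⁻¹) z :=
        (differentiableAt_inv hzne).const_mul _
      exact hd2.continuousAt.continuousWithinAt
    have hi13 : CircleIntegrable
        (fun z : ℂ => α * z + lam ^ 2 / (2 * α) * z ^ (-3 : ℤ)) 0 R := hi1.add hi3
    simp only [hp]
    rw [circleIntegral_add' hi13 hi2, circleIntegral_add' hi1 hi3,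
      hmono1, hmono3, hmono2]
    ring
  show (∮ z in C(0, R), f z) = -2 * Real.pi * Complex.I * E / α
  rw [hsplit, hintp, hJzero, add_zero]
  ring
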